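/- arXiv:1410.8107 — 4 statements merged into one kernel-verified Lean document; each statement's English description precedes it below -/
import Mathlib

section
/- The set of pairs (Q, P) of d×d complex matrices satisfying QᵀP − PᵀQ = 0 and Q*P − P*Q = 2i·I_d is in bijection with Sp(2d, ℝ) via (Q,P) ↦ the real 2d×2d block matrix [[Re Q, Im Q],[Re P, Im P]]; i.e., the block matrix Y := [[Re Q, Im Q],[Re P, Im P]] satisfies Yᵀ𝕁Y = 𝕁 (with 𝕁 = [[0, I],[−I, 0]]) if and only if QᵀP − PᵀQ = 0 and Q*P − P*Q = 2i·I_d. -/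
open Matrix

section HagedornAux
variable {d : ℕ}

private lemma mapRI_eq (R S R' S' : Matrix (Fin d) (Fin d) ℝ) :
    R.map (Complex.ofReal) + Complex.I • S.map (Complex.ofReal)
      = R'.map (Complex.ofReal) + Complex.I • S'.map (Complex.ofReal) ↔ R = R' ∧ S = S' := by
  constructor
  · intro h
    have h' : ∀ i j, (R i j : ℂ) + Complex.I * S i j = (R' i j : ℂ) + Complex.I * S' i j := by
      intro i j
      have := congrFun (congrFun h i) j
      simpa [Matrix.map_apply, Matrix.smul_apply] using this
    constructor <;> ext i j
    · have := congrArg Complex.re (h' i j); simpa using this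
    · have := congrArg Complex.im (h' i j); simpa using this
  · rintro ⟨rfl, rfl⟩; rfl

private lemma mapmul (X Y : Matrix (Fin d) (Fin d) ℝ) :
    (X * Y).map (Complex.ofReal) = X.map (Complex.ofReal) * Y.map (Complex.ofReal) := by
  ext i j; simp [Matrix.mul_apply, Matrix.map_apply]

private lemma mapsub (X Y : Matrix (Fin d) (Fin d) ℝ) :
    (X - Y).map (Complex.ofReal) = X.map (Complex.ofReal) - Y.map (Complex.ofReal) := by
  ext i j; simp [Matrix.map_apply]

private lemma mapadd (X Y : Matrix (Fin d) (Fin d) ℝ) :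
    (X + Y).map (Complex.ofReal) = X.map (Complex.ofReal) + Y.map (Complex.ofReal) := by
  ext i j; simp [Matrix.map_apply]

private lemma expand_mul (A B C D : Matrix (Fin d) (Fin d) ℝ) :
    (A.map (Complex.ofReal) + Complex.I • B.map (Complex.ofReal)) *
      (C.map (Complex.ofReal) + Complex.I • D.map (Complex.ofReal))
    = (A*C - B*D).map (Complex.ofReal) + Complex.I • ((A*D + B*C).map (Complex.ofReal)) := by
  simp only [add_mul, mul_add, smul_mul_assoc, mul_smul_comm, smul_smul, Complex.I_mul_I,
    mapsub, mapadd, mapmul, smul_add]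
  module

private lemma expand_sub (R S R' S' : Matrix (Fin d) (Fin d) ℝ) :
    (R.map (Complex.ofReal) + Complex.I • S.map (Complex.ofReal))
      - (R'.map (Complex.ofReal) + Complex.I • S'.map (Complex.ofReal))
    = (R - R').map (Complex.ofReal) + Complex.I • ((S - S').map (Complex.ofReal)) := by
  rw [mapsub, mapsub, smul_sub]; module

private lemma decompT (Q : Matrix (Fin d) (Fin d) ℂ) :
    Qᵀ = ((Q.map Complex.re)ᵀ).map (Complex.ofReal)
      + Complex.I • ((Q.map Complex.im)ᵀ).map (Complex.ofReal) := by
  ext i j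
  simp [Matrix.map_apply, Matrix.smul_apply, Matrix.transpose_apply]
  rw [mul_comm, Complex.re_add_im]

private lemma decompH (Q : Matrix (Fin d) (Fin d) ℂ) :
    Qᴴ = ((Q.map Complex.re)ᵀ).map (Complex.ofReal)
      + Complex.I • ((-(Q.map Complex.im)ᵀ)).map (Complex.ofReal) := by
  ext i j
  simp [Matrix.map_apply, Matrix.smul_apply, Matrix.transpose_apply,
    Matrix.conjTranspose_apply, Matrix.neg_apply, Complex.ext_iff]

end HagedornAux

/-- The standard symplectic matrix `𝕁 = [[0, I],[−I, 0]]`. -/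
def Jmat (d : ℕ) : Matrix (Fin d ⊕ Fin d) (Fin d ⊕ Fin d) ℝ :=
  Matrix.fromBlocks 0 1 (-1) 0

/-- For `d×d` complex matrices `Q, P`, the real block matrix
`Y = [[Re Q, Im Q],[Re P, Im P]]` is symplectic (`Yᵀ𝕁Y = 𝕁`) if and only if
`QᵀP − PᵀQ = 0` and `Q*P − P*Q = 2i·I_d`. -/
theorem hagedorn_pair_iff_symplectic {d : ℕ} (Q P : Matrix (Fin d) (Fin d) ℂ) :
    (Matrix.fromBlocks (Q.map Complex.re) (Q.map Complex.im)
        (P.map Complex.re) (P.map Complex.im))ᵀ * Jmat d *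
      Matrix.fromBlocks (Q.map Complex.re) (Q.map Complex.im)
        (P.map Complex.re) (P.map Complex.im) = Jmat d
    ↔ (Qᵀ * P - Pᵀ * Q = 0 ∧ Qᴴ * P - Pᴴ * Q = (2 * Complex.I) • (1 : Matrix (Fin d) (Fin d) ℂ)) := by
  set A := Q.map Complex.re with hA
  set B := Q.map Complex.im with hB
  set C := P.map Complex.re with hC
  set D := P.map Complex.im with hD
  -- decompositions
  have hQt := decompT Q; have hPt := decompT P
  have hQh := decompH Q; have hPh := decompH P
  have hPd : P = C.map (Complex.ofReal) + Complex.I • D.map (Complex.ofReal) := by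
    ext i j
    simp [hC, hD, Matrix.map_apply, Matrix.smul_apply]
    rw [mul_comm, Complex.re_add_im]
  have hQd : Q = A.map (Complex.ofReal) + Complex.I • B.map (Complex.ofReal) := by
    ext i j
    simp [hA, hB, Matrix.map_apply, Matrix.smul_apply]
    rw [mul_comm, Complex.re_add_im]
  rw [Jmat, Matrix.fromBlocks_transpose, Matrix.fromBlocks_multiply, Matrix.fromBlocks_multiply]
  simp only [Matrix.mul_zero, Matrix.mul_one, Matrix.mul_neg, zero_add, add_zero,
    mul_zero, mul_one]
  rw [Matrix.fromBlocks_inj]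
  rw [← hA, ← hB] at hQt hQh
  rw [← hC, ← hD] at hPt hPh
  have c2 : (2 * Complex.I) • (1 : Matrix (Fin d) (Fin d) ℂ)
      = (0 : Matrix (Fin d) (Fin d) ℝ).map (Complex.ofReal)
        + Complex.I • (((2:ℝ) • (1 : Matrix (Fin d) (Fin d) ℝ)).map (Complex.ofReal)) := by
    ext i j
    by_cases h : i = j <;>
      simp [Matrix.one_apply, h, Matrix.smul_apply, Matrix.map_apply] <;> ring
  have c0 : (0 : Matrix (Fin d) (Fin d) ℂ)
      = (0 : Matrix (Fin d) (Fin d) ℝ).map (Complex.ofReal)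
        + Complex.I • ((0 : Matrix (Fin d) (Fin d) ℝ).map (Complex.ofReal)) := by
    ext i j; simp
  conv_rhs => rw [hQt, hPt, hQh, hPh, hPd, hQd, c2, c0]
  rw [expand_mul, expand_mul, expand_mul, expand_mul, expand_sub, expand_sub,
    mapRI_eq, mapRI_eq]
  constructor
  · rintro ⟨h1, h2, h3, h4⟩
    refine ⟨⟨?_, ?_⟩, ?_, ?_⟩ <;>
      (ext i j
       have e1 := congrFun (congrFun h1 i) j
       have e2 := congrFun (congrFun h2 i) j
       have e3 := congrFun (congrFun h3 i) j
       have e4 := congrFun (congrFun h4 i) j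
       simp only [Matrix.neg_mul, Matrix.add_apply, Matrix.sub_apply, Matrix.neg_apply,
         Matrix.one_apply, Matrix.zero_apply, Matrix.smul_apply, smul_eq_mul] at e1 e2 e3 e4 ⊢
       linarith)
  · rintro ⟨⟨h1, h2⟩, h3, h4⟩
    refine ⟨?_, ?_, ?_, ?_⟩ <;>
      (ext i j
       have e1 := congrFun (congrFun h1 i) j
       have e2 := congrFun (congrFun h2 i) j
       have e3 := congrFun (congrFun h3 i) j
       have e4 := congrFun (congrFun h4 i) j
       simp only [Matrix.neg_mul, Matrix.add_apply, Matrix.sub_apply, Matrix.neg_apply,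
         Matrix.one_apply, Matrix.zero_apply, Matrix.smul_apply, smul_eq_mul] at e1 e2 e3 e4 ⊢
       linarith)
end

section
/- If (Q,P) are d×d complex matrices with QᵀP − PᵀQ = 0 and Q*P − P*Q = 2i·I_d, then Q is invertible and PQ⁻¹ lies in the Siegel upper half space Σ_d: PQ⁻¹ is complex symmetric and its imaginary part is positive-definite. -/
open Matrix

lemma quad_aux {d : ℕ} (A : Matrix (Fin d) (Fin d) ℂ) (v w : Fin d → ℂ) :
    star v ⬝ᵥ (Aᴴ *ᵥ w) = star (A *ᵥ v) ⬝ᵥ w := by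
  rw [star_mulVec, dotProduct_mulVec]

/-- If `Q, P` are `d×d` complex matrices with `QᵀP − PᵀQ = 0` and
`Q*P − P*Q = 2i·I_d`, then `Q` is invertible and `PQ⁻¹` lies in the Siegel upper half
space: `PQ⁻¹` is complex symmetric and its imaginary part is positive-definite. -/
theorem hagedorn_pair_quotient_mem_siegel {d : ℕ} (Q P : Matrix (Fin d) (Fin d) ℂ)
    (h1 : Qᵀ * P - Pᵀ * Q = 0)
    (h2 : Qᴴ * P - Pᴴ * Q = (2 * Complex.I) • (1 : Matrix (Fin d) (Fin d) ℂ)) :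
    IsUnit Q ∧ (P * Q⁻¹)ᵀ = P * Q⁻¹ ∧
      (Matrix.of fun i j => ((P * Q⁻¹) i j).im).PosDef := by
  -- Q is injective hence invertible
  have hker : ∀ v : Fin d → ℂ, Q *ᵥ v = 0 → v = 0 := by
    intro v hv
    have e : star v ⬝ᵥ ((Qᴴ * P - Pᴴ * Q) *ᵥ v) = 0 := by
      rw [sub_mulVec, dotProduct_sub, ← mulVec_mulVec, ← mulVec_mulVec,
        quad_aux, quad_aux, hv]
      simp
    rw [h2, smul_mulVec, dotProduct_smul, one_mulVec] at e
    have hvv : star v ⬝ᵥ v = 0 := by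
      have h2i : (2 * Complex.I) ≠ 0 := by simp [Complex.I_ne_zero]
      exact (smul_eq_zero.mp e).resolve_left h2i
    ext i
    have hre := congrArg Complex.re hvv
    simp only [dotProduct, Complex.re_sum, Complex.zero_re] at hre
    have hre' : ∑ j, Complex.normSq (v j) = 0 := by
      rw [← hre]
      refine Finset.sum_congr rfl fun j _ => ?_
      simp [Pi.star_apply, Complex.normSq_apply, Complex.mul_re]
    have hsum : ∀ j, Complex.normSq (v j) = 0 := by
      intro j
      exact (Finset.sum_eq_zero_iff_of_nonneg
        (fun j _ => Complex.normSq_nonneg (v j))).mp hre' j (Finset.mem_univ j)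
    simpa using Complex.normSq_eq_zero.mp (hsum i)
  have hdet : Q.det ≠ 0 := by
    intro h
    obtain ⟨v, hv, hQv⟩ := (Matrix.exists_mulVec_eq_zero_iff).mpr h
    exact hv (hker v hQv)
  have hdetU : IsUnit Q.det := isUnit_iff_ne_zero.mpr hdet
  have hU : IsUnit Q := (Matrix.isUnit_iff_isUnit_det Q).mpr hdetU
  have hQQi : Q * Q⁻¹ = 1 := mul_nonsing_inv Q hdetU
  have hQiQ : Q⁻¹ * Q = 1 := nonsing_inv_mul Q hdetU
  have hdetT : IsUnit (Qᵀ).det := by simpa [det_transpose] using hdetU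
  have hQTi : (Qᵀ)⁻¹ * Qᵀ = 1 := nonsing_inv_mul _ hdetT
  -- symmetry
  have h1' : Qᵀ * P = Pᵀ * Q := sub_eq_zero.mp h1
  have key1 : (Qᵀ)⁻¹ * (Pᵀ * Q) * Q⁻¹ = P * Q⁻¹ := by
    rw [← h1', ← mul_assoc, hQTi, one_mul]
  have key2 : (Qᵀ)⁻¹ * (Pᵀ * Q) * Q⁻¹ = (Qᵀ)⁻¹ * Pᵀ := by
    rw [mul_assoc, mul_assoc, hQQi, mul_one]
  have hsym : (P * Q⁻¹)ᵀ = P * Q⁻¹ := by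
    rw [transpose_mul, transpose_nonsing_inv, ← key2, key1]
  refine ⟨hU, hsym, ?_⟩
  -- key identity for imaginary part
  have hQiH : Q⁻¹ᴴ * Qᴴ = 1 := by
    rw [← conjTranspose_mul, hQQi, conjTranspose_one]
  have hA : Q⁻¹ᴴ * (Qᴴ * (P * Q⁻¹)) = P * Q⁻¹ := by
    rw [← Matrix.mul_assoc Q⁻¹ᴴ Qᴴ, hQiH, one_mul]
  have hB : Q⁻¹ᴴ * (Pᴴ * (Q * Q⁻¹)) = Q⁻¹ᴴ * Pᴴ := by
    rw [hQQi, mul_one]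
  have hkey : (P * Q⁻¹) - (P * Q⁻¹)ᴴ = (2 * Complex.I) • (Q⁻¹ᴴ * Q⁻¹) := by
    have h2' := congrArg (fun N => Q⁻¹ᴴ * N * Q⁻¹) h2
    simp only [mul_sub, sub_mul, mul_smul_comm, smul_mul_assoc, mul_one,
      Matrix.mul_one, Matrix.mul_assoc] at h2'
    rw [hA, hB] at h2'
    rw [conjTranspose_mul]
    exact h2'
  set M := P * Q⁻¹ with hM
  constructor
  · -- Hermitian (symmetric real matrix)
    ext i j
    simp only [conjTranspose_apply, of_apply, star_trivial]
    have hMsym : M j i = M i j := by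
      have := congrFun (congrFun hsym i) j
      simpa [transpose_apply] using this
    exact congrArg Complex.im hMsym
  · intro x hx
    set z : Fin d → ℂ := fun i => (x i : ℂ) with hz
    have hzsz : star z = z := by funext i; simp [hz]
    have hzne : z ≠ 0 := by
      intro h
      apply hx
      ext i
      have := congrFun h i
      simpa [hz] using congrArg Complex.re this
    set w : Fin d → ℂ := Q⁻¹ *ᵥ z with hw
    have hwne : w ≠ 0 := by
      intro h
      apply hzne
      have : Q *ᵥ (Q⁻¹ *ᵥ z) = Q *ᵥ 0 := by rw [← hw, h]
      rwa [mulVec_mulVec, hQQi, one_mulVec, mulVec_zero] at this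
    have hquad : z ⬝ᵥ (M *ᵥ z) - z ⬝ᵥ (Mᴴ *ᵥ z) = (2 * Complex.I) * (star w ⬝ᵥ w) := by
      have := congrArg (fun A => z ⬝ᵥ (A *ᵥ z)) hkey
      simp only [sub_mulVec, dotProduct_sub, smul_mulVec, dotProduct_smul,
        smul_eq_mul] at this
      rw [this]
      congr 1
      rw [← hzsz, ← mulVec_mulVec, quad_aux, hzsz]
    have hconj : z ⬝ᵥ (Mᴴ *ᵥ z) = starRingEnd ℂ (z ⬝ᵥ (M *ᵥ z)) := by
      have h := quad_aux M z z
      rw [hzsz] at h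
      rw [h]
      simp only [dotProduct, mulVec, Pi.star_apply, Complex.star_def, map_sum,
        _root_.map_mul, Finset.mul_sum, Finset.sum_mul, hz, Complex.conj_ofReal]
      refine Finset.sum_congr rfl fun i _ => Finset.sum_congr rfl fun j _ => ?_
      ring
    have him : (z ⬝ᵥ (M *ᵥ z)).im = (star w ⬝ᵥ w).re := by
      have h := congrArg Complex.im hquad
      rw [hconj] at h
      simp only [Complex.sub_im, Complex.conj_im, Complex.mul_im, Complex.mul_re,
        Complex.I_re, Complex.I_im] at h
      norm_num at h
      linarith
    have hwpos : 0 < (star w ⬝ᵥ w).re := by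
      have hnn : ∀ j ∈ Finset.univ, (0:ℝ) ≤ (star (w j) * w j).re := by
        intro j _
        simp only [Pi.star_apply, Complex.star_def, Complex.mul_re, Complex.conj_re,
          Complex.conj_im]
        nlinarith [sq_nonneg (w j).re, sq_nonneg (w j).im]
      have hex : ∃ j, w j ≠ 0 := by
        by_contra h
        push_neg at h
        exact hwne (funext h)
      obtain ⟨j, hj⟩ := hex
      have hjpos : 0 < (star (w j) * w j).re := by
        simp only [Pi.star_apply, Complex.star_def, Complex.mul_re, Complex.conj_re,
          Complex.conj_im]
        have := Complex.normSq_pos.mpr hj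
        simp only [Complex.normSq_apply] at this
        nlinarith
      calc (0:ℝ) < (star (w j) * w j).re := hjpos
        _ ≤ ∑ k, (star (w k) * w k).re :=
            Finset.single_le_sum hnn (Finset.mem_univ j)
        _ = (star w ⬝ᵥ w).re := by simp [dotProduct, Complex.re_sum]
    have hreal : star x ⬝ᵥ ((Matrix.of fun i j => (M i j).im) *ᵥ x)
        = (z ⬝ᵥ (M *ᵥ z)).im := by
      simp only [dotProduct, mulVec, Complex.im_sum, Pi.star_apply, star_trivial,
        of_apply, Finset.mul_sum, Complex.mul_im, hz, Complex.ofReal_re, Complex.ofReal_im]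
      refine Finset.sum_congr rfl fun i _ => Finset.sum_congr rfl fun j _ => ?_
      ring
    have hfs : (x.sum fun i xi => x.sum fun j xj => star xi * (Matrix.of fun i j => (M i j).im) i j * xj) = star ⇑x ⬝ᵥ ((Matrix.of fun i j => (M i j).im) *ᵥ ⇑x) := by
      simp [dotProduct, mulVec, Finsupp.sum_fintype, Finset.mul_sum, mul_assoc]
    rw [hfs, hreal, him]
    exact hwpos
end

section
/- Conversely (uniqueness of the lift): suppose ξ ∈ sp(2d,ℝ), written in blocks ξ = [[ξ₁₁, ξ₁₂],[ξ₂₁, −ξ₁₁ᵀ]] with ξ₁₂, ξ₂₁ symmetric, satisfies ξ₂₁ − ξ₁₁ᵀ C − C ξ₁₁ − C ξ₁₂ C = −(1/m)C² − S for every C in the Siegel upper half space Σ_d, where m > 0 and S is a fixed real symmetric matrix. Then ξ₁₁ = 0, ξ₁₂ = (1/m)I_d, and ξ₂₁ = −S. -/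
open Matrix

/-- Coercion of a real matrix to a complex matrix. -/
def coeM {d : ℕ} (M : Matrix (Fin d) (Fin d) ℝ) : Matrix (Fin d) (Fin d) ℂ :=
  M.map (fun x => (x : ℂ))

lemma coeM_eq {d : ℕ} (M : Matrix (Fin d) (Fin d) ℝ) :
    coeM M = Complex.ofRealHom.mapMatrix M := rfl

lemma coeM_zero {d : ℕ} : coeM (0 : Matrix (Fin d) (Fin d) ℝ) = 0 := by
  simp [coeM_eq]
lemma coeM_one {d : ℕ} : coeM (1 : Matrix (Fin d) (Fin d) ℝ) = 1 := by
  simp [coeM_eq]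
lemma coeM_add {d : ℕ} (X Y : Matrix (Fin d) (Fin d) ℝ) : coeM (X + Y) = coeM X + coeM Y := by
  ext i j; simp [coeM]
lemma coeM_sub {d : ℕ} (X Y : Matrix (Fin d) (Fin d) ℝ) : coeM (X - Y) = coeM X - coeM Y := by
  ext i j; simp [coeM]
lemma coeM_neg {d : ℕ} (X : Matrix (Fin d) (Fin d) ℝ) : coeM (-X) = -coeM X := by
  ext i j; simp [coeM]
lemma coeM_mul {d : ℕ} (X Y : Matrix (Fin d) (Fin d) ℝ) : coeM (X * Y) = coeM X * coeM Y := by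
  simp [coeM_eq]
lemma coeM_smul {d : ℕ} (r : ℝ) (X : Matrix (Fin d) (Fin d) ℝ) :
    coeM (r • X) = (r : ℂ) • coeM X := by
  ext i j; simp [coeM_eq, Complex.ofReal_mul]

lemma coeM_split {d : ℕ} {X Y Z W : Matrix (Fin d) (Fin d) ℝ}
    (h : coeM X + Complex.I • coeM Y = coeM Z + Complex.I • coeM W) : X = Z ∧ Y = W := by
  constructor <;> ext i j <;>
  · have := congrFun (congrFun h i) j
    simp [coeM, Complex.ext_iff] at this
    tauto

/-- **uniqueness of the lift.** Suppose the element
`ξ = [[ξ₁₁, ξ₁₂],[ξ₂₁, −ξ₁₁ᵀ]] ∈ sp(2d,ℝ)` (with `ξ₁₂, ξ₂₁` symmetric) satisfies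
`ξ₂₁ − ξ₁₁ᵀ C − C ξ₁₁ − C ξ₁₂ C = −(1/m)C² − S` for every `C = A + iB` in the Siegel
upper half space `Σ_d`, where `m > 0` and `S` is a fixed real symmetric matrix.
Then `ξ₁₁ = 0`, `ξ₁₂ = (1/m)I`, and `ξ₂₁ = −S`. -/
theorem lift_uniqueness {d : ℕ} (m : ℝ) (hm : 0 < m)
    (ξ₁₁ ξ₁₂ ξ₂₁ S : Matrix (Fin d) (Fin d) ℝ)
    (hξ₁₂ : ξ₁₂.IsSymm) (hξ₂₁ : ξ₂₁.IsSymm) (hS : S.IsSymm)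
    (h : ∀ A B : Matrix (Fin d) (Fin d) ℝ, A.IsSymm → B.IsSymm → B.PosDef →
      coeM ξ₂₁ - coeM ξ₁₁ᵀ * (coeM A + Complex.I • coeM B)
          - (coeM A + Complex.I • coeM B) * coeM ξ₁₁
          - (coeM A + Complex.I • coeM B) * coeM ξ₁₂ * (coeM A + Complex.I • coeM B)
        = -(1 / (m : ℂ)) • ((coeM A + Complex.I • coeM B) * (coeM A + Complex.I • coeM B))
          - coeM S) :
    ξ₁₁ = 0 ∧ ξ₁₂ = (1 / m) • 1 ∧ ξ₂₁ = -S := by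
  -- Step 1: A = 0, B = 1
  have h1 := h 0 1 Matrix.isSymm_zero Matrix.isSymm_one Matrix.PosDef.one
  simp only [coeM_zero, coeM_one, zero_add, smul_mul_assoc, mul_smul_comm, one_mul, mul_one,
    smul_smul, Complex.I_mul_I, neg_smul, one_smul, neg_neg] at h1
  have e1 : coeM (ξ₂₁ + ξ₁₂) + Complex.I • coeM (-(ξ₁₁ᵀ + ξ₁₁))
      = coeM ((1/m) • 1 - S) + Complex.I • coeM 0 := by
    simp only [coeM_add, coeM_sub, coeM_neg, coeM_smul, coeM_mul, coeM_one, coeM_zero]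
    push_cast
    linear_combination (norm := module) h1
  obtain ⟨r1, i1⟩ := coeM_split e1
  -- Step 2: A = 0, B = 1 + 1
  have h2 := h 0 (1 + 1) Matrix.isSymm_zero (Matrix.isSymm_one.add Matrix.isSymm_one)
    (Matrix.PosDef.one.add Matrix.PosDef.one)
  simp only [coeM_zero, coeM_one, coeM_add, zero_add, smul_mul_assoc, mul_smul_comm,
    one_mul, mul_one, smul_add, smul_smul, mul_assoc, neg_mul, mul_neg, Complex.I_mul_I,
    neg_smul, one_smul, neg_neg, add_mul, mul_add] at h2
  have e2 : coeM (ξ₂₁ + (4:ℝ) • ξ₁₂) + Complex.I • coeM (-((2:ℝ) • (ξ₁₁ᵀ + ξ₁₁)))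
      = coeM ((4/m) • 1 - S) + Complex.I • coeM 0 := by
    simp only [coeM_add, coeM_sub, coeM_neg, coeM_smul, coeM_mul, coeM_one, coeM_zero]
    push_cast
    linear_combination (norm := module) h2
  obtain ⟨r2, _⟩ := coeM_split e2
  -- deduce ξ₁₂ and ξ₂₁
  have hx12 : ξ₁₂ = (1 / m) • 1 := by
    linear_combination (norm := module) (1/3 : ℝ) • r2 - (1/3 : ℝ) • r1
  have hx21 : ξ₂₁ = -S := by
    linear_combination (norm := module) r1 - hx12
  -- Step 3: A = stdBasisMatrix i i 1, B = 1
  have hK : ∀ i : Fin d, ξ₁₁ᵀ * (Matrix.single i i 1)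
      + (Matrix.single i i 1) * ξ₁₁ = 0 := by
    intro i
    set A : Matrix (Fin d) (Fin d) ℝ := Matrix.single i i 1 with hA
    have hAs : A.IsSymm := by
      ext a b
      rw [Matrix.transpose_apply, hA]
      simp [Matrix.single, and_comm]
    have h3 := h A 1 hAs Matrix.isSymm_one Matrix.PosDef.one
    simp only [coeM_one, smul_mul_assoc, mul_smul_comm, one_mul, mul_one, smul_add,
      smul_smul, mul_assoc, neg_mul, mul_neg, Complex.I_mul_I, neg_smul, one_smul, neg_neg,
      add_mul, mul_add, coeM_mul] at h3
    have e3 : coeM (ξ₂₁ - ξ₁₁ᵀ * A - A * ξ₁₁ - A * ξ₁₂ * A + ξ₁₂)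
        + Complex.I • coeM (-(ξ₁₁ᵀ + ξ₁₁) - (A * ξ₁₂ + ξ₁₂ * A))
        = coeM ((-(1/m)) • (A * A) + (1/m) • 1 - S) + Complex.I • coeM ((-(2/m)) • A) := by
      simp only [coeM_add, coeM_sub, coeM_neg, coeM_smul, coeM_mul, coeM_one, coeM_zero,
        mul_assoc]
      push_cast
      linear_combination (norm := module) h3
    obtain ⟨r3, _⟩ := coeM_split e3
    have hAA : A * ξ₁₂ * A = (1/m) • (A * A) := by
      rw [hx12, mul_smul_comm, smul_mul_assoc, mul_one]
    rw [hAA, hx12, hx21] at r3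
    linear_combination (norm := module) -r3
  have hK0 : ξ₁₁ = 0 := by
    ext p q
    have hpq := congrFun (congrFun (hK p) p) q
    by_cases hq : q = p
    · subst hq
      simp [Matrix.transpose_apply] at hpq
      simp
      linarith
    · simp [hq] at hpq
      simpa using hpq
  exact ⟨hK0, hx12, hx21⟩
end

section
/- Consider the phase space T*ℝ^d × Σ_d with symplectic form Ω_ħ = dq ∧ dp + (ħ/4) dB⁻¹_{jk} ∧ dA_{jk} (summation over j,k), ħ > 0, and the Poisson bracket {F,G}_ħ = ∂F/∂q·∂G/∂p − ∂G/∂q·∂F/∂p + (4/ħ)(∂F/∂B⁻¹_{jk} ∂G/∂A_{jk} − ∂G/∂B⁻¹_{jk} ∂F/∂A_{jk}). For d = 3, the components of the semiclassical angular momentum vector J⃗_ħ = q × p − (ħ/2)[B⁻¹, A]^∨ satisfy {(J⃗_ħ)_i, (J⃗_ħ)_j}_ħ = (J⃗_ħ)_k for any cyclic permutation (i,j,k) of (1,2,3), where ∨ is the inverse of the hat map. -/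
noncomputable section

/-- The semiclassical state space `{(q, p, B⁻¹, A)}` for `d = 3`: here the third
component is the matrix `B⁻¹` (the coordinate conjugate to `A`) and the fourth is `A`. -/
abbrev SCState : Type :=
  (Fin 3 → ℝ) × (Fin 3 → ℝ) × (Fin 3 → Fin 3 → ℝ) × (Fin 3 → Fin 3 → ℝ)

/-- Unit coordinate direction in `q`. -/
def dirq (i : Fin 3) : SCState := (Pi.single i 1, 0, 0, 0)

/-- Unit coordinate direction in `p`. -/
def dirp (i : Fin 3) : SCState := (0, Pi.single i 1, 0, 0)

/-- The unit coordinate direction for the (symmetric-matrix) coordinate `M_{jk} = M_{kj}`: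
the symmetrized elementary matrix `(E_{jk} + E_{kj})/2` (which is `E_{jj}` when `j = k`). -/
def symDir (j k : Fin 3) : Fin 3 → Fin 3 → ℝ := fun a b =>
  (if a = j ∧ b = k then (1 : ℝ) / 2 else 0) + (if a = k ∧ b = j then (1 : ℝ) / 2 else 0)

/-- Coordinate direction in the `B⁻¹` block. -/
def dirBinv (j k : Fin 3) : SCState := (0, 0, symDir j k, 0)

/-- Coordinate direction in the `A` block. -/
def dirA (j k : Fin 3) : SCState := (0, 0, 0, symDir j k)

/-- Matrix commutator `[X, Y] = XY − YX` (entrywise). -/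
def mcomm (X Y : Fin 3 → Fin 3 → ℝ) : Fin 3 → Fin 3 → ℝ := fun i j =>
  ∑ l, (X i l * Y l j - Y i l * X l j)

/-- Inverse hat map `∨ : so(3) → ℝ³`. -/
def vee (M : Fin 3 → Fin 3 → ℝ) : Fin 3 → ℝ := ![M 2 1, M 0 2, M 1 0]

/-- The `i`-th component of the semiclassical angular momentum vector
`J⃗_ħ = q × p − (ħ/2)[B⁻¹, A]^∨` as a function on the state space. -/
def Jvec (hbar : ℝ) (i : Fin 3) (s : SCState) : ℝ :=
  crossProduct s.1 s.2.1 i - hbar / 2 * vee (mcomm s.2.2.1 s.2.2.2) i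

/-- The semiclassical Poisson bracket
`{F,G}_ħ = ∂F/∂q·∂G/∂p − ∂G/∂q·∂F/∂p
  + (4/ħ) Σ_{jk} (∂F/∂B⁻¹_{jk} ∂G/∂A_{jk} − ∂G/∂B⁻¹_{jk} ∂F/∂A_{jk})`,
where matrix partial derivatives are taken with respect to the symmetric-matrix
coordinates. -/
def pBracket (hbar : ℝ) (F G : SCState → ℝ) (s : SCState) : ℝ :=
  (∑ i, (fderiv ℝ F s (dirq i) * fderiv ℝ G s (dirp i)
      - fderiv ℝ G s (dirq i) * fderiv ℝ F s (dirp i)))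
  + (4 / hbar) * ∑ j, ∑ k,
      (fderiv ℝ F s (dirBinv j k) * fderiv ℝ G s (dirA j k)
        - fderiv ℝ G s (dirBinv j k) * fderiv ℝ F s (dirA j k))

noncomputable def cqL (a : Fin 3) : SCState →L[ℝ] ℝ :=
  (ContinuousLinearMap.proj a : (Fin 3 → ℝ) →L[ℝ] ℝ).comp (ContinuousLinearMap.fst ℝ _ _)
noncomputable def cpL (a : Fin 3) : SCState →L[ℝ] ℝ :=
  (ContinuousLinearMap.proj a : (Fin 3 → ℝ) →L[ℝ] ℝ).comp
    ((ContinuousLinearMap.fst ℝ _ _).comp (ContinuousLinearMap.snd ℝ _ _))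
noncomputable def cBL (a b : Fin 3) : SCState →L[ℝ] ℝ :=
  (ContinuousLinearMap.proj b : (Fin 3 → ℝ) →L[ℝ] ℝ).comp
    (((ContinuousLinearMap.proj a : (Fin 3 → Fin 3 → ℝ) →L[ℝ] (Fin 3 → ℝ))).comp
    ((ContinuousLinearMap.fst ℝ _ _).comp ((ContinuousLinearMap.snd ℝ _ _).comp (ContinuousLinearMap.snd ℝ _ _))))
noncomputable def cAL (a b : Fin 3) : SCState →L[ℝ] ℝ :=
  (ContinuousLinearMap.proj b : (Fin 3 → ℝ) →L[ℝ] ℝ).comp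
    (((ContinuousLinearMap.proj a : (Fin 3 → Fin 3 → ℝ) →L[ℝ] (Fin 3 → ℝ))).comp
    ((ContinuousLinearMap.snd ℝ _ _).comp ((ContinuousLinearMap.snd ℝ _ _).comp (ContinuousLinearMap.snd ℝ _ _))))

@[simp] lemma cqL_apply (a : Fin 3) (v : SCState) : cqL a v = v.1 a := rfl
@[simp] lemma cpL_apply (a : Fin 3) (v : SCState) : cpL a v = v.2.1 a := rfl
@[simp] lemma cBL_apply (a b : Fin 3) (v : SCState) : cBL a b v = v.2.2.1 a b := rfl
@[simp] lemma cAL_apply (a b : Fin 3) (v : SCState) : cAL a b v = v.2.2.2 a b := rfl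

lemma hasF_cross (a b : Fin 3) (s : SCState) :
    HasFDerivAt (fun s : SCState => s.1 a * s.2.1 b - s.1 b * s.2.1 a)
      ((s.1 a • cpL b + s.2.1 b • cqL a) - (s.1 b • cpL a + s.2.1 a • cqL b)) s :=
  ((cqL a).hasFDerivAt.mul (cpL b).hasFDerivAt).sub
    ((cqL b).hasFDerivAt.mul (cpL a).hasFDerivAt)

lemma hasF_com (r c : Fin 3) (s : SCState) :
    HasFDerivAt (fun s : SCState => mcomm s.2.2.1 s.2.2.2 r c)
      (∑ l, ((s.2.2.1 r l • cAL l c + s.2.2.2 l c • cBL r l)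
        - (s.2.2.2 r l • cBL l c + s.2.2.1 l c • cAL r l))) s :=
  HasFDerivAt.fun_sum fun l _ =>
    ((cBL r l).hasFDerivAt.mul (cAL l c).hasFDerivAt).sub
      ((cAL r l).hasFDerivAt.mul (cBL l c).hasFDerivAt)

lemma fderiv_Jvec (hbar : ℝ) (i : Fin 3) (s v : SCState) :
    fderiv ℝ (Jvec hbar i) s v =
      (crossProduct v.1 s.2.1 i + crossProduct s.1 v.2.1 i)
      - hbar / 2 * (vee (mcomm v.2.2.1 s.2.2.2) i + vee (mcomm s.2.2.1 v.2.2.2) i) := by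
  fin_cases i
  · show fderiv ℝ (Jvec hbar 0) s v =
      (crossProduct v.1 s.2.1 0 + crossProduct s.1 v.2.1 0)
      - hbar / 2 * (vee (mcomm v.2.2.1 s.2.2.2) 0 + vee (mcomm s.2.2.1 v.2.2.2) 0)
    have h : HasFDerivAt (Jvec hbar 0) _ s :=
      (hasF_cross 1 2 s).sub ((hasF_com 2 1 s).const_mul (hbar / 2))
    rw [h.fderiv]
    simp [crossProduct, vee, mcomm, Fin.sum_univ_three]
    ring
  · show fderiv ℝ (Jvec hbar 1) s v =
      (crossProduct v.1 s.2.1 1 + crossProduct s.1 v.2.1 1)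
      - hbar / 2 * (vee (mcomm v.2.2.1 s.2.2.2) 1 + vee (mcomm s.2.2.1 v.2.2.2) 1)
    have h : HasFDerivAt (Jvec hbar 1) _ s :=
      (hasF_cross 2 0 s).sub ((hasF_com 0 2 s).const_mul (hbar / 2))
    rw [h.fderiv]
    simp [crossProduct, vee, mcomm, Fin.sum_univ_three]
    ring
  · show fderiv ℝ (Jvec hbar 2) s v =
      (crossProduct v.1 s.2.1 2 + crossProduct s.1 v.2.1 2)
      - hbar / 2 * (vee (mcomm v.2.2.1 s.2.2.2) 2 + vee (mcomm s.2.2.1 v.2.2.2) 2)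
    have h : HasFDerivAt (Jvec hbar 2) _ s :=
      (hasF_cross 0 1 s).sub ((hasF_com 1 0 s).const_mul (hbar / 2))
    rw [h.fderiv]
    simp [crossProduct, vee, mcomm, Fin.sum_univ_three]
    ring

@[simp] lemma cross0 (a b : Fin 3 → ℝ) : crossProduct a b 0 = a 1 * b 2 - a 2 * b 1 := rfl
@[simp] lemma cross1 (a b : Fin 3 → ℝ) : crossProduct a b 1 = a 2 * b 0 - a 0 * b 2 := rfl
@[simp] lemma cross2 (a b : Fin 3 → ℝ) : crossProduct a b 2 = a 0 * b 1 - a 1 * b 0 := rfl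
@[simp] lemma vee0 (M : Fin 3 → Fin 3 → ℝ) : vee M 0 = M 2 1 := rfl
@[simp] lemma vee1 (M : Fin 3 → Fin 3 → ℝ) : vee M 1 = M 0 2 := rfl
@[simp] lemma vee2 (M : Fin 3 → Fin 3 → ℝ) : vee M 2 = M 1 0 := rfl
lemma mcomm_apply (X Y : Fin 3 → Fin 3 → ℝ) (r c : Fin 3) :
    mcomm X Y r c = (X r 0 * Y 0 c - Y r 0 * X 0 c) + (X r 1 * Y 1 c - Y r 1 * X 1 c)
      + (X r 2 * Y 2 c - Y r 2 * X 2 c) := by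
  simp [mcomm, Fin.sum_univ_three]; ring

set_option maxHeartbeats 1600000 in
/-- For `d = 3`, the components of the semiclassical angular momentum
vector `J⃗_ħ = q × p − (ħ/2)[B⁻¹,A]^∨` satisfy `{(J⃗_ħ)_i, (J⃗_ħ)_j}_ħ = (J⃗_ħ)_k` for any
cyclic permutation `(i,j,k)` of `(1,2,3)`, with respect to the semiclassical Poisson
bracket, at every state `(q, p, A, B)` with `A, B` symmetric and `B` positive-definite. -/
theorem semiclassical_angular_momentum_poisson (hbar : ℝ) (hhbar : 0 < hbar)
    (q p : Fin 3 → ℝ) (A B : Matrix (Fin 3) (Fin 3) ℝ)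
    (hA : A.IsSymm) (hB : B.IsSymm) (hBpos : B.PosDef)
    (i j k : Fin 3)
    (hcyc : (i, j, k) = ((0 : Fin 3), (1 : Fin 3), (2 : Fin 3))
      ∨ (i, j, k) = (1, 2, 0) ∨ (i, j, k) = (2, 0, 1)) :
    pBracket hbar (Jvec hbar i) (Jvec hbar j)
        (q, p, fun a b => B⁻¹ a b, fun a b => A a b)
      = Jvec hbar k (q, p, fun a b => B⁻¹ a b, fun a b => A a b) := by
  have hBi : (B⁻¹).IsSymm := by
    rw [Matrix.IsSymm, Matrix.transpose_nonsing_inv, hB.eq]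
  rcases hcyc with h | h | h <;>
    (simp only [Prod.mk.injEq] at h; obtain ⟨rfl, rfl, rfl⟩ := h) <;>
  · rw [pBracket]
    simp only [Fin.sum_univ_three]
    simp only [fderiv_Jvec]
    simp only [dirq, dirp, dirBinv, dirA, Jvec, Pi.single_apply]
    norm_num [Fin.ext_iff]
    simp only [mcomm_apply, symDir]
    norm_num [Fin.ext_iff]
    simp only [hA.apply 0 1, hA.apply 0 2, hA.apply 1 2, hBi.apply 0 1, hBi.apply 0 2,
      hBi.apply 1 2]
    field_simp
    ring
end
end
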